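/- Let 0 < p < 1/3 and q = 1 - p, and set ε₀ = p²/2 - ε₁, γ₀ = -1/2 + pqn/2 + ε₁, γ₁ = -pqn/2 - ε₁, λ₀(j) = (-p/q)^j, λ₁(j) = (-p/q)^j(1 - j/(np)). Define u_j = p²/2 - ε₀λ₀(j) - ε₁λ₁(j) and v_j = δ_j - γ₀λ₀(j) - γ₁λ₁(j) with δ₀ = -1/2 and δ_j = 0 for j ≥ 1. Then u₀ = v₀ = 0 and u₁ = -v₁ = (p²n - 2ε₁)/(2qn); moreover, for sufficiently small ε₁ > 0, the 2×2 matrix [[u_j, v_j],[v_j, u_j]] is positive semidefinite for every integer j with 0 ≤ j ≤ n. -/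

import Mathlib

open Matrix

lemma psd2_aux (a b : ℝ) (h1 : 0 ≤ a + b) (h2 : 0 ≤ a - b) :
    Matrix.PosSemidef !![a, b; b, a] := by
  rw [Matrix.posSemidef_iff_dotProduct_mulVec]
  constructor
  · ext i j
    fin_cases i <;> fin_cases j <;>
      simp [Matrix.conjTranspose, Matrix.transpose, Matrix.vecHead, Matrix.vecTail]
  · intro x
    simp [Matrix.mulVec, dotProduct, Fin.sum_univ_two]
    nlinarith [sq_nonneg (x 0 + x 1), sq_nonneg (x 0 - x 1)]

lemma aux1_cert (p : ℝ) (hp0 : 0 < p) (hp1 : p < 1 / 3) (k : ℕ) :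
    (1-p)^k * ((1-2*p)*(1-3*p)) + p^(k+1) * ((1-p)*((k:ℝ)+3) - 1 - p^2)
      ≤ (1-p)^(k+3) := by
  induction k with
  | zero => push_cast; nlinarith
  | succ k ih =>
    have hq : 0 < 1 - p := by linarith
    have hpk : (0:ℝ) < p^(k+1) := pow_pos hp0 _
    have hkk : (0:ℝ) ≤ (k:ℝ) := Nat.cast_nonneg k
    have key : p^(k+2) * ((1-p)*((k:ℝ)+1+3) - 1 - p^2)
        ≤ (1-p) * (p^(k+1) * ((1-p)*((k:ℝ)+3) - 1 - p^2)) := by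
      have h2 : (1-p) * ((1-p)*((k:ℝ)+3) - 1 - p^2) - p * ((1-p)*((k:ℝ)+4) - 1 - p^2)
          ≥ 0 := by nlinarith
      have h3 := mul_le_mul_of_nonneg_left h2.le hpk.le
      ring_nf
      ring_nf at h3
      nlinarith [h3]
    push_cast
    calc (1-p)^(k+1) * ((1-2*p)*(1-3*p)) + p^(k+1+1) * ((1-p)*((k:ℝ)+1+3) - 1 - p^2)
        ≤ (1-p)^(k+1) * ((1-2*p)*(1-3*p)) + (1-p) * (p^(k+1) * ((1-p)*((k:ℝ)+3) - 1 - p^2)) := by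
          have he : p^(k+1+1) = p^(k+2) := by ring
          rw [he]; linarith [key]
      _ = (1-p) * ((1-p)^k * ((1-2*p)*(1-3*p)) + p^(k+1) * ((1-p)*((k:ℝ)+3) - 1 - p^2)) := by ring
      _ ≤ (1-p) * (1-p)^(k+3) := by linarith [mul_le_mul_of_nonneg_left ih hq.le]
      _ = (1-p)^(k+1+3) := by ring

lemma aux2_cert (p : ℝ) (hp0 : 0 < p) (hp1 : p < 1 / 3) (k : ℕ) :
    p^(k+2) * ((1-p)*((k:ℝ)+4) - 1 + p^2) ≤ (1-p)^(k+4) := by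
  induction k with
  | zero => push_cast; nlinarith
  | succ k ih =>
    have hq : 0 < 1 - p := by linarith
    have hpk : (0:ℝ) < p^(k+2) := pow_pos hp0 _
    have hkk : (0:ℝ) ≤ (k:ℝ) := Nat.cast_nonneg k
    have key : p^(k+3) * ((1-p)*((k:ℝ)+1+4) - 1 + p^2)
        ≤ (1-p) * (p^(k+2) * ((1-p)*((k:ℝ)+4) - 1 + p^2)) := by
      have h2 : (1-p) * ((1-p)*((k:ℝ)+4) - 1 + p^2) - p * ((1-p)*((k:ℝ)+5) - 1 + p^2)
          ≥ 0 := by nlinarith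
      have h3 := mul_le_mul_of_nonneg_left h2.le hpk.le
      ring_nf
      ring_nf at h3
      nlinarith [h3]
    push_cast
    calc p^(k+1+2) * ((1-p)*((k:ℝ)+1+4) - 1 + p^2)
        = p^(k+3) * ((1-p)*((k:ℝ)+1+4) - 1 + p^2) := by ring
      _ ≤ (1-p) * (p^(k+2) * ((1-p)*((k:ℝ)+4) - 1 + p^2)) := key
      _ ≤ (1-p) * (1-p)^(k+4) := by linarith [mul_le_mul_of_nonneg_left ih hq.le]
      _ = (1-p)^(k+1+4) := by ring

set_option maxHeartbeats 1000000 in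
theorem stmt_17 (n : ℕ) (hn : 1 ≤ n) (p : ℝ) (hp0 : 0 < p) (hp1 : p < 1 / 3)
    (q : ℝ) (hq : q = 1 - p)
    (lam0 lam1 : ℕ → ℝ)
    (hlam0 : ∀ j, lam0 j = (-(p / q)) ^ j)
    (hlam1 : ∀ j, lam1 j = (-(p / q)) ^ j * (1 - (j : ℝ) / ((n : ℝ) * p)))
    (u v : ℝ → ℕ → ℝ)
    (hu : ∀ ε₁ j, u ε₁ j = p ^ 2 / 2 - (p ^ 2 / 2 - ε₁) * lam0 j - ε₁ * lam1 j)
    (hv : ∀ ε₁ j, v ε₁ j =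
      (if j = 0 then (-(1 / 2) : ℝ) else 0)
        - (-(1 / 2) + p * q * n / 2 + ε₁) * lam0 j - (-(p * q * n / 2) - ε₁) * lam1 j) :
    (∀ ε₁ : ℝ, u ε₁ 0 = 0 ∧ v ε₁ 0 = 0 ∧
      u ε₁ 1 = (p ^ 2 * n - 2 * ε₁) / (2 * q * n) ∧
      v ε₁ 1 = -((p ^ 2 * n - 2 * ε₁) / (2 * q * n))) ∧
    ∃ ε > 0, ∀ ε₁ : ℝ, 0 < ε₁ → ε₁ < ε → ∀ j : ℕ, j ≤ n →
      Matrix.PosSemidef !![u ε₁ j, v ε₁ j; v ε₁ j, u ε₁ j] := by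
  subst hq
  have hq0 : (0:ℝ) < 1 - p := by linarith
  have hqne : (1:ℝ) - p ≠ 0 := ne_of_gt hq0
  have hn0 : (0:ℝ) < (n:ℝ) := by exact_mod_cast Nat.lt_of_lt_of_le Nat.zero_lt_one hn
  have hpq : p < 1 - p := by linarith
  have part1 : ∀ ε₁ : ℝ, u ε₁ 0 = 0 ∧ v ε₁ 0 = 0 ∧
      u ε₁ 1 = (p ^ 2 * n - 2 * ε₁) / (2 * (1-p) * n) ∧
      v ε₁ 1 = -((p ^ 2 * n - 2 * ε₁) / (2 * (1-p) * n)) := by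
    intro ε₁
    refine ⟨?_, ?_, ?_, ?_⟩
    · rw [hu, hlam0, hlam1]; norm_num
    · rw [hv, hlam0, hlam1]; norm_num; ring
    · rw [hu, hlam0, hlam1]; field_simp; ring
    · rw [hv, hlam0, hlam1]; norm_num; field_simp; ring
  refine ⟨part1, ⟨min (p^2/2) ((1-2*p)*(1-3*p)/4), ?_, ?_⟩⟩
  · apply lt_min
    · positivity
    · nlinarith
  intro ε₁ hε₁0 hε₁ε j hj
  have hε₁p : ε₁ < p^2/2 := lt_of_lt_of_le hε₁ε (min_le_left _ _)
  have hε₁G : ε₁ ≤ (1-2*p)*(1-3*p)/4 := le_of_lt (lt_of_lt_of_le hε₁ε (min_le_right _ _))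
  have hG : (0:ℝ) < (1-2*p)*(1-3*p) := by nlinarith
  have hsum : ∀ j : ℕ, j ≠ 0 →
      u ε₁ j + v ε₁ j = p^2/2 + (-(p/(1-p)))^j * ((1 - p^2 - (1-p)*(j:ℝ))/2) := by
    intro j hj0
    rw [hu, hv, hlam0, hlam1, if_neg hj0]
    field_simp
    ring
  have hdiff : ∀ j : ℕ, j ≠ 0 →
      u ε₁ j - v ε₁ j
        = p^2/2 + (-(p/(1-p)))^j * (((1-p)*(j:ℝ) - 1 - p^2)/2 + 2*ε₁*(j:ℝ)/((n:ℝ)*p)) := by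
    intro j hj0
    rw [hu, hv, hlam0, hlam1, if_neg hj0]
    field_simp
    ring
  match j with
  | 0 =>
    obtain ⟨h1, h2, -, -⟩ := part1 ε₁
    rw [h1, h2]
    exact psd2_aux 0 0 (by norm_num) (by norm_num)
  | 1 =>
    obtain ⟨-, -, h3, h4⟩ := part1 ε₁
    rw [h3, h4]
    have hc : 0 ≤ (p ^ 2 * n - 2 * ε₁) / (2 * (1-p) * n) := by
      apply div_nonneg
      · have h1n : (1:ℝ) ≤ (n:ℝ) := by exact_mod_cast hn
        nlinarith
      · positivity
    exact psd2_aux _ _ (by linarith) (by linarith)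
  | 2 =>
    apply psd2_aux
    · rw [hsum 2 (by norm_num)]
      have he : p^2/2 + (-(p/(1-p)))^2 * ((1 - p^2 - (1-p)*((2:ℕ):ℝ))/2) = 0 := by
        push_cast; field_simp; ring
      rw [he]
    · rw [hdiff 2 (by norm_num)]
      have h1 : (-(p/(1-p)))^2 = (p/(1-p))^2 := by ring
      rw [h1]
      have h2 : (0:ℝ) ≤ ((1-p)*((2:ℕ):ℝ) - 1 - p^2)/2 := by push_cast; nlinarith
      have h3 : (0:ℝ) ≤ 2*ε₁*((2:ℕ):ℝ)/((n:ℝ)*p) := by positivity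
      have h4 : (0:ℝ) ≤ (p/(1-p))^2 := sq_nonneg _
      nlinarith [mul_le_mul_of_nonneg_left (by linarith : (0:ℝ) ≤ ((1-p)*((2:ℕ):ℝ) - 1 - p^2)/2 + 2*ε₁*((2:ℕ):ℝ)/((n:ℝ)*p)) h4]
  | (m+3) =>
    have hj0 : (m+3 : ℕ) ≠ 0 := by omega
    have hm0 : (0:ℝ) ≤ (m:ℝ) := Nat.cast_nonneg m
    have hjn : ((m+3 : ℕ):ℝ) ≤ (n:ℝ) := by exact_mod_cast hj
    have hc3 : ((m+3 : ℕ):ℝ) = (m:ℝ)+3 := by push_cast; ring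
    rcases Nat.even_or_odd (m+3) with heven | hodd
    · -- even case, m+3 = k+4
      obtain ⟨k, hk⟩ : ∃ k, m + 3 = k + 4 := by
        rcases Nat.even_or_odd m with hm | hm
        · exfalso; rcases hm with ⟨a, ha⟩; rcases heven with ⟨b, hb⟩; omega
        · rcases hm with ⟨a, ha⟩; exact ⟨2*a, by omega⟩
      have hk0 : (0:ℝ) ≤ (k:ℝ) := Nat.cast_nonneg k
      have hc4 : ((k+4 : ℕ):ℝ) = (k:ℝ)+4 := by push_cast; ring
      have hkeven : Even (k+4) := hk ▸ heven
      apply psd2_aux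
      · rw [hsum _ hj0, hk, Even.neg_pow hkeven, hc4]
        have h := mul_le_mul_of_nonneg_left (aux2_cert p hp0 hp1 k) (sq_nonneg p)
        have hb : (p/(1-p))^(k+4) * (((1-p)*((k:ℝ)+4) - 1 + p^2)/2) ≤ p^2/2 := by
          rw [div_pow, div_mul_eq_mul_div, div_le_iff₀ (pow_pos hq0 _)]
          have e1 : p^(k+4) * (((1-p)*((k:ℝ)+4) - 1 + p^2)/2)
              = (p^2 * (p^(k+2) * ((1-p)*((k:ℝ)+4) - 1 + p^2)))/2 := by ring
          have e2 : p^2/2 * (1-p)^(k+4) = (p^2 * (1-p)^(k+4))/2 := by ring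
          rw [e1, e2]
          linarith
        have he : ((1:ℝ) - p^2 - (1-p)*((k:ℝ)+4))/2 = -(((1-p)*((k:ℝ)+4) - 1 + p^2)/2) := by
          ring
        rw [he, mul_neg]
        linarith
      · rw [hdiff _ hj0, hk, Even.neg_pow hkeven, hc4]
        have h2 : (0:ℝ) ≤ ((1-p)*((k:ℝ)+4) - 1 - p^2)/2 := by nlinarith
        have h3 : (0:ℝ) ≤ 2*ε₁*((k:ℝ)+4)/((n:ℝ)*p) := by positivity
        have h4 : (0:ℝ) ≤ (p/(1-p))^(k+4) := by positivity
        nlinarith [mul_le_mul_of_nonneg_left (by linarith : (0:ℝ) ≤ ((1-p)*((k:ℝ)+4) - 1 - p^2)/2 + 2*ε₁*((k:ℝ)+4)/((n:ℝ)*p)) h4]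
    · -- odd case
      apply psd2_aux
      · rw [hsum _ hj0, Odd.neg_pow hodd, hc3]
        have h2 : (0:ℝ) ≤ ((1-p)*((m:ℝ)+3) - 1 + p^2)/2 := by nlinarith
        have h4 : (0:ℝ) ≤ (p/(1-p))^(m+3) := by positivity
        have he : ((1:ℝ) - p^2 - (1-p)*((m:ℝ)+3))/2 = -(((1-p)*((m:ℝ)+3) - 1 + p^2)/2) := by
          ring
        rw [he, neg_mul_neg]
        linarith [mul_nonneg h4 h2]
      · rw [hdiff _ hj0, Odd.neg_pow hodd, hc3, neg_mul]
        have hb1 : (p/(1-p))^(m+3) * (((1-p)*((m:ℝ)+3) - 1 - p^2)/2)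
            ≤ p^2/2 - p^2*((1-2*p)*(1-3*p))/(2*(1-p)^3) := by
          have h := mul_le_mul_of_nonneg_left (aux1_cert p hp0 hp1 m) (sq_nonneg p)
          rw [div_pow, div_mul_eq_mul_div, div_le_iff₀ (pow_pos hq0 _)]
          have he : (p^2/2 - p^2*((1-2*p)*(1-3*p))/(2*(1-p)^3)) * (1-p)^(m+3)
              = (p^2 * (1-p)^(m+3) - p^2 * ((1-p)^m * ((1-2*p)*(1-3*p))))/2 := by
            have h3 : ((1:ℝ)-p)^(m+3) = (1-p)^m * (1-p)^3 := by ring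
            rw [h3]
            field_simp
          rw [he]
          have e1 : p^(m+3) * (((1-p)*((m:ℝ)+3) - 1 - p^2)/2)
              = (p^2 * ((1-p)^m * ((1-2*p)*(1-3*p)) + p^(m+1) * ((1-p)*((m:ℝ)+3) - 1 - p^2))
                  - p^2 * ((1-p)^m * ((1-2*p)*(1-3*p))))/2 := by ring
          rw [e1]
          linarith
        have hb2 : (p/(1-p))^(m+3) * (2*ε₁*((m:ℝ)+3)/((n:ℝ)*p))
            ≤ p^2*((1-2*p)*(1-3*p))/(2*(1-p)^3) := by
          rw [div_pow, div_mul_div_comm,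
            div_le_div_iff₀ (mul_pos (pow_pos hq0 _) (mul_pos hn0 hp0))
              (by nlinarith [pow_pos hq0 3] : (0:ℝ) < 2*(1-p)^3)]
          have hkpow : p^m ≤ (1-p)^m := pow_le_pow_left₀ hp0.le hpq.le m
          have s1 : 4*ε₁*((m:ℝ)+3)*p^m ≤ (1-2*p)*(1-3*p)*(n:ℝ)*(1-p)^m := by
            have hpm : (0:ℝ) < p^m := pow_pos hp0 m
            have hjnm : (m:ℝ)+3 ≤ (n:ℝ) := by rw [hc3] at hjn; exact hjn
            nlinarith [mul_le_mul_of_nonneg_right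
                (by linarith : 4*ε₁ ≤ (1-2*p)*(1-3*p))
                (mul_nonneg (by linarith : (0:ℝ) ≤ (m:ℝ)+3) hpm.le),
              mul_le_mul_of_nonneg_right hjnm (mul_nonneg hG.le hpm.le),
              mul_le_mul_of_nonneg_right hkpow (mul_nonneg hG.le hn0.le)]
          have final := mul_le_mul_of_nonneg_right s1
            (by positivity : (0:ℝ) ≤ p^3*(1-p)^3)
          have e1 : p^(m+3) * (2*ε₁*((m:ℝ)+3)) * (2*(1-p)^3)
              = (4*ε₁*((m:ℝ)+3)*p^m) * (p^3*(1-p)^3) := by ring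
          have e2 : p^2*((1-2*p)*(1-3*p)) * ((1-p)^(m+3) * ((n:ℝ)*p))
              = ((1-2*p)*(1-3*p)*(n:ℝ)*(1-p)^m) * (p^3*(1-p)^3) := by ring
          rw [e1, e2]
          exact final
        have expand : (p/(1-p))^(m+3) * (((1-p)*((m:ℝ)+3) - 1 - p^2)/2 + 2*ε₁*((m:ℝ)+3)/((n:ℝ)*p))
            = (p/(1-p))^(m+3) * (((1-p)*((m:ℝ)+3) - 1 - p^2)/2)
              + (p/(1-p))^(m+3) * (2*ε₁*((m:ℝ)+3)/((n:ℝ)*p)) := mul_add _ _ _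
        linarith
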